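/- arXiv:2602.01252 — 9 statements merged into one kernel-verified Lean document; each statement's English description precedes it below -/
import Mathlib

section
/- Let b ≥ 2 and k ≥ 1 be integers, and set B = b^k. Let m ≥ 1 with gcd(m, b) = 1 and let r satisfy 0 ≤ r < m. Then there exist infinitely many positive integers n with n ≡ r (mod m) such that s_b(n) divides n and s_B(n) divides n; i.e., the arithmetic progression {n : n ≡ r (mod m)} contains infinitely many integers that are simultaneously b-Niven and b^k-Niven. -/
lemma aux_digits_len_le {b a s : ℕ} (hb : 1 < b) (ha : a < b ^ s) :
    (Nat.digits b a).length ≤ s := by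
  rcases Nat.eq_zero_or_pos a with rfl | ha0
  · simp
  rw [Nat.digits_len b a hb ha0.ne']
  have := (Nat.log_lt_iff_lt_pow hb ha0.ne').mpr ha
  omega

lemma aux_sum_digits_add_pow_mul {b : ℕ} (hb : 1 < b) {a s x : ℕ} (ha : a < b ^ s)
    (hx : 0 < x) :
    (Nat.digits b (a + b ^ s * x)).sum = (Nat.digits b a).sum + (Nat.digits b x).sum := by
  have hlen : (Nat.digits b a).length ≤ s := aux_digits_len_le hb ha
  have hs : s = (Nat.digits b a).length + (s - (Nat.digits b a).length) :=
    (Nat.add_sub_cancel' hlen).symm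
  rw [hs, ← Nat.digits_append_zeroes_append_digits hb hx]
  simp

lemma aux_sum_digits_geom (b M : ℕ) (hb : 2 ≤ b) (hM : 1 ≤ M) (N : ℕ) :
    (∑ j ∈ Finset.range N, b ^ (M * j)) < b ^ (M * N) ∧
    (Nat.digits b (∑ j ∈ Finset.range N, b ^ (M * j))).sum = N := by
  induction N with
  | zero => simp
  | succ N ih =>
    obtain ⟨ihlt, ihsum⟩ := ih
    have hbM : 2 ≤ b ^ M := le_trans hb (Nat.le_self_pow (by omega) b)
    constructor
    · rw [Finset.sum_range_succ]
      calc (∑ j ∈ Finset.range N, b ^ (M * j)) + b ^ (M * N)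
          < b ^ (M * N) + b ^ (M * N) := by omega
        _ = 2 * b ^ (M * N) := by ring
        _ ≤ b ^ M * b ^ (M * N) := Nat.mul_le_mul_right _ hbM
        _ = b ^ (M * (N + 1)) := by rw [← pow_add]; ring_nf
    · rw [Finset.sum_range_succ]
      have h1 : b ^ (M * N) = b ^ (M * N) * 1 := by ring
      rw [h1, aux_sum_digits_add_pow_mul (by omega) ihlt Nat.one_pos, ihsum]
      have : Nat.digits b 1 = [1] := by
        rw [Nat.digits_def' (by omega : 1 < b) Nat.one_pos]
        simp [Nat.mod_eq_of_lt (by omega : 1 < b), Nat.div_eq_of_lt (by omega : 1 < b)]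
      rw [this]; simp

lemma aux_modeq_sum {M : ℕ} {f g : ℕ → ℕ} (h : ∀ j, f j ≡ g j [MOD M]) (n : ℕ) :
    (∑ j ∈ Finset.range n, f j) ≡ (∑ j ∈ Finset.range n, g j) [MOD M] := by
  induction n with
  | zero => rfl
  | succ n ih => rw [Finset.sum_range_succ, Finset.sum_range_succ]; exact ih.add (h n)

/-- Every arithmetic progression `r mod m` with `gcd(m,b)=1` contains infinitely many
integers that are simultaneously `b`-Niven and `b^k`-Niven. -/
theorem stmt_0 (b k m r : ℕ) (hb : 2 ≤ b) (hk : 1 ≤ k) (hm : 1 ≤ m)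
    (hgcd : Nat.gcd m b = 1) (hr : r < m) :
    {n : ℕ | 0 < n ∧ n ≡ r [MOD m] ∧
      ((Nat.digits b n).sum ∣ n) ∧ ((Nat.digits (b ^ k) n).sum ∣ n)}.Infinite := by
  have hcop : Nat.Coprime m b := hgcd
  -- choose N ≡ r [MOD m], N ≡ 1 [MOD b]
  obtain ⟨N, hNm, hNb⟩ := Nat.chineseRemainder hcop r 1
  have hN1 : 1 ≤ N := by
    rcases Nat.eq_zero_or_pos N with rfl | h
    · exfalso
      have : 0 % b = 1 % b := hNb
      rw [Nat.zero_mod, Nat.mod_eq_of_lt (by omega)] at this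
      omega
    · exact h
  have hbN : Nat.Coprime b N := by
    have hmod : N % b = 1 := by
      have : N % b = 1 % b := hNb
      rwa [Nat.mod_eq_of_lt (show 1 < b by omega)] at this
    have : Nat.gcd b N = 1 := by rw [Nat.gcd_rec, hmod, Nat.gcd_one_left]
    exact this
  have hbmN : Nat.Coprime b (m * N) := (hcop.symm).mul_right hbN
  have hBmN : Nat.Coprime (b ^ k) (m * N) := hbmN.pow_left k
  set B := b ^ k with hBdef
  have hB : 2 ≤ B := le_trans hb (Nat.le_self_pow (by omega) b)
  set e := Nat.totient (m * N) with hedef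
  have he1 : 1 ≤ e := Nat.totient_pos.mpr (by positivity)
  have hBe : B ^ e ≡ 1 [MOD m * N] := Nat.ModEq.pow_totient hBmN
  set c := ∑ j ∈ Finset.range N, B ^ (e * j) with hcdef
  have hc0 : 0 < c := by
    rw [hcdef]
    apply Finset.sum_pos (fun j _ => pow_pos (by omega) _) ⟨0, Finset.mem_range.mpr hN1⟩
  have hcN : c ≡ N [MOD m * N] := by
    have : c ≡ (∑ j ∈ Finset.range N, 1) [MOD m * N] := by
      apply aux_modeq_sum
      intro j
      calc B ^ (e * j) = (B ^ e) ^ j := pow_mul B e j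
        _ ≡ 1 ^ j [MOD m * N] := hBe.pow j
        _ = 1 := one_pow j
    simpa using this
  have hNc : N ∣ c := by
    have h1 : c ≡ N [MOD N] := hcN.of_dvd (dvd_mul_left N m)
    have h2 : c % N = N % N := h1
    rw [Nat.mod_self] at h2
    exact Nat.dvd_of_mod_eq_zero h2
  have hcr : c ≡ r [MOD m] := (hcN.of_dvd (dvd_mul_right m N)).trans hNm
  -- digit sums of c
  have hsumB : (Nat.digits B c).sum = N := (aux_sum_digits_geom B e hB he1 N).2
  have hcb : c = ∑ j ∈ Finset.range N, b ^ (k * e * j) := by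
    rw [hcdef]
    refine Finset.sum_congr rfl fun j _ => ?_
    rw [hBdef, ← pow_mul, mul_assoc]
  have hsumb : (Nat.digits b c).sum = N := by
    rw [hcb]
    exact (aux_sum_digits_geom b (k * e) hb (Nat.mul_pos hk he1) N).2
  -- the infinite family
  refine Set.infinite_of_injective_forall_mem
    (f := fun t : ℕ => B ^ (e * t) * c) ?_ ?_
  · have hmono : StrictMono (fun t : ℕ => B ^ (e * t) * c) := by
      intro s t hst
      have h1 : e * s < e * t := Nat.mul_lt_mul_of_pos_left hst (by omega)
      exact mul_lt_mul_of_pos_right (Nat.pow_lt_pow_right (by omega) h1) hc0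
    exact hmono.injective
  · intro t
    have hpos : 0 < B ^ (e * t) * c := Nat.mul_pos (pow_pos (by omega) _) hc0
    have hBet : B ^ (e * t) ≡ 1 [MOD m] := by
      calc B ^ (e * t) = (B ^ e) ^ t := pow_mul B e t
        _ ≡ 1 ^ t [MOD m] := (hBe.of_dvd (dvd_mul_right m N)).pow t
        _ = 1 := one_pow t
    refine ⟨hpos, ?_, ?_, ?_⟩
    · calc B ^ (e * t) * c ≡ 1 * c [MOD m] := hBet.mul_right c
        _ = c := one_mul c
        _ ≡ r [MOD m] := hcr
    · have : Nat.digits b (B ^ (e * t) * c) = List.replicate (k * (e * t)) 0 ++ Nat.digits b c := by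
        rw [show B ^ (e * t) = b ^ (k * (e * t)) from by rw [hBdef, ← pow_mul]]
        exact Nat.digits_base_pow_mul (by omega) hc0
      rw [this]
      simp only [List.sum_append, List.sum_replicate, smul_eq_mul, Nat.mul_zero, Nat.zero_add,
        hsumb]
      exact dvd_mul_of_dvd_right hNc _
    · have : Nat.digits B (B ^ (e * t) * c) = List.replicate (e * t) 0 ++ Nat.digits B c :=
        Nat.digits_base_pow_mul (by omega) hc0
      rw [this]
      simp only [List.sum_append, List.sum_replicate, smul_eq_mul, Nat.mul_zero, Nat.zero_add,
        hsumB]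
      exact dvd_mul_of_dvd_right hNc _
end

section
/- Let b ≥ 2 and k ≥ 1 be integers, and set B = b^k. Let m ≥ 1 with gcd(m, b) = 1 and let r satisfy 0 ≤ r < m. Then for every integer s₀ ≥ 1 there exists a positive integer n with n ≡ r (mod m), s_b(n) = s_B(n) ≥ s₀, s_b(n) dividing n, and s_B(n) dividing n. -/
private lemma digits_len_le_of_lt_pow {b m e : ℕ} (hb : 1 < b) (h : m < b ^ e) :
    (Nat.digits b m).length ≤ e := by
  rcases eq_or_ne m 0 with rfl | hm
  · simp
  rw [Nat.digits_len b m hb hm]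
  have := (Nat.log_lt_iff_lt_pow hb hm).mpr h
  omega

private lemma sum_digits_one {b : ℕ} (hb : 2 ≤ b) : Nat.digits b 1 = [1] := by
  rw [Nat.digits_def' (by omega : 1 < b) (by norm_num)]
  simp [Nat.mod_eq_of_lt (by omega : 1 < b), Nat.div_eq_of_lt (by omega : 1 < b)]

private lemma geom_digits (b k c : ℕ) (hb : 2 ≤ b) (hk : 1 ≤ k) (hc : 1 ≤ c) :
    ∀ S : ℕ, (∑ j ∈ Finset.range S, (b ^ k) ^ (c * j)) < (b ^ k) ^ (c * S) ∧
      (Nat.digits b (∑ j ∈ Finset.range S, (b ^ k) ^ (c * j))).sum = S ∧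
      (Nat.digits (b ^ k) (∑ j ∈ Finset.range S, (b ^ k) ^ (c * j))).sum = S := by
  have hB : 2 ≤ b ^ k := le_trans hb (Nat.le_self_pow (by omega) b)
  have hB1 : 1 < b ^ k := by omega
  intro S
  induction S with
  | zero => simp
  | succ S ih =>
    obtain ⟨hlt, hsb, hsB⟩ := ih
    set n := ∑ j ∈ Finset.range S, (b ^ k) ^ (c * j) with hn
    have hsum : (∑ j ∈ Finset.range (S + 1), (b ^ k) ^ (c * j))
        = n + (b ^ k) ^ (c * S) := by
      rw [Finset.sum_range_succ, add_comm]
    have hltb : n < b ^ (k * (c * S)) := by rwa [pow_mul]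
    -- bound
    have hbound : n + (b ^ k) ^ (c * S) < (b ^ k) ^ (c * (S + 1)) := by
      have h1 : n + (b ^ k) ^ (c * S) < 2 * (b ^ k) ^ (c * S) := by omega
      have h2 : 2 * (b ^ k) ^ (c * S) ≤ (b ^ k) ^ (c * S + 1) := by
        rw [pow_succ]
        calc 2 * (b ^ k) ^ (c * S) = (b ^ k) ^ (c * S) * 2 := mul_comm _ _
          _ ≤ (b ^ k) ^ (c * S) * b ^ k := Nat.mul_le_mul_left _ hB
      have h3 : (b ^ k) ^ (c * S + 1) ≤ (b ^ k) ^ (c * (S + 1)) :=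
        Nat.pow_le_pow_right (by omega) (by nlinarith)
      omega
    -- base b digits
    have hlenb : (Nat.digits b n).length ≤ k * (c * S) :=
      digits_len_le_of_lt_pow (by omega) hltb
    have hdigb : (Nat.digits b (n + (b ^ k) ^ (c * S))).sum = S + 1 := by
      have := Nat.digits_append_zeroes_append_digits
        (b := b) (k := k * (c * S) - (Nat.digits b n).length) (m := 1) (n := n)
        (by omega) (by norm_num)
      rw [(by omega : (Nat.digits b n).length + (k * (c * S) - (Nat.digits b n).length)
        = k * (c * S)), mul_one] at this
      rw [show (b ^ k) ^ (c * S) = b ^ (k * (c * S)) from (pow_mul b k (c * S)).symm, ← this]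
      simp [sum_digits_one hb, hsb]
    -- base b^k digits
    have hlenB : (Nat.digits (b ^ k) n).length ≤ c * S :=
      digits_len_le_of_lt_pow hB1 hlt
    have hdigB : (Nat.digits (b ^ k) (n + (b ^ k) ^ (c * S))).sum = S + 1 := by
      have := Nat.digits_append_zeroes_append_digits
        (b := b ^ k) (k := c * S - (Nat.digits (b ^ k) n).length) (m := 1) (n := n)
        hB1 (by norm_num)
      rw [(by omega : (Nat.digits (b ^ k) n).length
        + (c * S - (Nat.digits (b ^ k) n).length) = c * S), mul_one] at this
      rw [← this]
      simp [sum_digits_one hB, hsB]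
    rw [hsum]
    exact ⟨hbound, hdigb, hdigB⟩

/-- For every `s₀ ≥ 1` there is `n` in the progression with
`s_b(n) = s_{b^k}(n) ≥ s₀` and `n` simultaneously `b`- and `b^k`-Niven. -/
theorem stmt_1 (b k m r : ℕ) (hb : 2 ≤ b) (hk : 1 ≤ k) (hm : 1 ≤ m)
    (hgcd : Nat.gcd m b = 1) (hr : r < m) (s₀ : ℕ) (hs₀ : 1 ≤ s₀) :
    ∃ n : ℕ, 0 < n ∧ n ≡ r [MOD m] ∧
      (Nat.digits b n).sum = (Nat.digits (b ^ k) n).sum ∧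
      s₀ ≤ (Nat.digits b n).sum ∧
      (Nat.digits b n).sum ∣ n ∧ (Nat.digits (b ^ k) n).sum ∣ n := by
  -- choose S ≡ r [MOD m], S ≡ 1 [MOD b], S ≥ s₀
  have hco : Nat.Coprime m b := hgcd
  obtain ⟨a, ham, hab⟩ := Nat.chineseRemainder hco r 1
  set S := a + m * b * s₀ with hS
  have hSr : S ≡ r [MOD m] := by
    have : a ≡ S [MOD m] := (Nat.modEq_iff_dvd' (by omega)).mpr ⟨b * s₀, by rw [hS, Nat.add_sub_cancel_left]; ring⟩
    exact this.symm.trans ham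
  have hSb : S ≡ 1 [MOD b] := by
    have : a ≡ S [MOD b] := (Nat.modEq_iff_dvd' (by omega)).mpr ⟨m * s₀, by rw [hS, Nat.add_sub_cancel_left]; ring⟩
    exact this.symm.trans hab
  have hSs : s₀ ≤ S := by
    have : s₀ ≤ m * b * s₀ := Nat.le_mul_of_pos_left s₀ (Nat.mul_pos (by omega) (by omega))
    omega
  have hS1 : 1 ≤ S := le_trans hs₀ hSs
  have hcoSb : Nat.Coprime S b := by
    have h1 : Nat.Coprime 1 b := Nat.coprime_one_left b
    have : S % b = 1 % b := hSb
    rw [Nat.coprime_comm, Nat.Coprime, Nat.gcd_rec, this, ← Nat.gcd_rec]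
    exact h1.symm
  -- the modulus
  set N := S * m with hN
  have hN1 : 1 ≤ N := by simpa using Nat.mul_le_mul hS1 hm
  have hcoBN : Nat.Coprime (b ^ k) N := by
    have h1 : Nat.Coprime b S := hcoSb.symm
    have h2 : Nat.Coprime b m := hco.symm
    exact (Nat.Coprime.mul_right h1 h2).pow_left k
  set c := Nat.totient N with hc
  have hc1 : 1 ≤ c := Nat.totient_pos.mpr (by omega)
  set n := ∑ j ∈ Finset.range S, (b ^ k) ^ (c * j) with hn
  obtain ⟨hlt, hsb, hsB⟩ := geom_digits b k c hb hk hc1 S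
  have hnpos : 0 < n := by
    rw [hn]
    have : (b ^ k) ^ (c * 0) ≤ ∑ j ∈ Finset.range S, (b ^ k) ^ (c * j) :=
      Finset.single_le_sum (f := fun j => (b ^ k) ^ (c * j))
        (fun i _ => Nat.zero_le _) (Finset.mem_range.mpr (by omega))
    exact lt_of_lt_of_le (by simp) this
  -- n ≡ S [MOD N]
  have hmod : n ≡ S [MOD N] := by
    have hpow : (b ^ k) ^ c ≡ 1 [MOD N] := Nat.ModEq.pow_totient hcoBN
    rw [← ZMod.natCast_eq_natCast_iff] at hpow ⊢
    push_cast
    rw [hn]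
    push_cast
    calc (∑ j ∈ Finset.range S, ((b : ZMod N) ^ k) ^ (c * j))
        = ∑ j ∈ Finset.range S, (1 : ZMod N) := by
          refine Finset.sum_congr rfl fun j _ => ?_
          rw [pow_mul]
          have : ((b : ZMod N) ^ k) ^ c = 1 := by
            have := hpow; push_cast at this; exact this
          rw [this, one_pow]
      _ = S := by simp
  have hmodm : n ≡ r [MOD m] :=
    (Nat.ModEq.of_mul_left S hmod).trans hSr
  have hdvd : S ∣ n := by
    have h1 : n ≡ S [MOD S] := Nat.ModEq.of_mul_right m hmod
    have h2 : n % S = S % S := h1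
    rw [Nat.mod_self] at h2
    exact Nat.dvd_of_mod_eq_zero h2
  exact ⟨n, hnpos, hmodm, by rw [hsb, hsB], hsb ▸ hSs, hsb ▸ hdvd, hsB ▸ hdvd⟩
end

section
/- Let b ≥ 2 and k ≥ 1 be integers with B = b^k, let m ≥ 1 with gcd(m, b) = 1, let r satisfy 0 ≤ r < m, and let s ≥ 1 satisfy s ≡ r (mod m) and gcd(s, b) = 1. Set ω = ord_{ms}(B), the multiplicative order of B modulo ms, and n = Σ_{j=0}^{s−1} B^{jω}. Then n ≡ r (mod m). -/
/-- With `ω = ord_{ms}(b^k)` and `n = Σ_{j<s} (b^k)^{jω}`, we have `n ≡ r (mod m)`. -/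
theorem stmt_4 (b k m r s : ℕ) (hb : 2 ≤ b) (hk : 1 ≤ k) (hm : 1 ≤ m)
    (hgcd : Nat.gcd m b = 1) (hr : r < m) (hs : 1 ≤ s) (hsr : s ≡ r [MOD m])
    (hsb : Nat.gcd s b = 1)
    (ω : ℕ) (hω : ω = orderOf ((b ^ k : ℕ) : ZMod (m * s)))
    (n : ℕ) (hn : n = ∑ j ∈ Finset.range s, (b ^ k) ^ (j * ω)) :
    n ≡ r [MOD m] := by
  have h1 : (b ^ k) ^ ω ≡ 1 [MOD m * s] := by
    have := pow_orderOf_eq_one ((b ^ k : ℕ) : ZMod (m * s))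
    rw [← hω] at this
    have : (((b ^ k) ^ ω : ℕ) : ZMod (m * s)) = ((1 : ℕ) : ZMod (m * s)) := by
      push_cast
      simpa using this
    exact (ZMod.natCast_eq_natCast_iff _ _ _).mp this
  have h1m : (b ^ k) ^ ω ≡ 1 [MOD m] :=
    h1.of_dvd ⟨s, rfl⟩
  have hterm : ∀ j, (b ^ k) ^ (j * ω) ≡ 1 [MOD m] := by
    intro j
    rw [mul_comm, pow_mul]
    simpa using h1m.pow j
  have hsum : n ≡ s [MOD m] := by
    apply (ZMod.natCast_eq_natCast_iff _ _ _).mp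
    rw [hn]
    push_cast
    calc ∑ j ∈ Finset.range s, ((b:ZMod m) ^ k) ^ (j * ω)
        = ∑ j ∈ Finset.range s, 1 := by
          refine Finset.sum_congr rfl fun j _ => ?_
          have := (ZMod.natCast_eq_natCast_iff _ _ _).mpr (hterm j)
          push_cast at this
          simpa using this
      _ = (s : ZMod m) := by simp
  exact hsum.trans hsr
end

section
/- Let b ≥ 2 and k ≥ 1 be integers with B = b^k, let m ≥ 1 with gcd(m, b) = 1, let r satisfy 0 ≤ r < m, and let s ≥ 1 satisfy s ≡ r (mod m) and gcd(s, b) = 1. Set ω = ord_{ms}(B) and n = Σ_{j=0}^{s−1} B^{jω}. Then n ≡ r (mod m), s_b(n) divides n, and s_B(n) divides n; i.e., n lies in the prescribed arithmetic progression and is simultaneously b-Niven and b^k-Niven. -/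
/-- Helper: a sum of distinct powers `b^(j*e)`, `j < t`, has digit sum `t` in base `b`,
and is bounded by `b^(t*e)`. -/
lemma sum_digits_geom (b e : ℕ) (hb : 2 ≤ b) (he : 1 ≤ e) (t : ℕ) :
    (Nat.digits b (∑ j ∈ Finset.range t, b ^ (j * e))).sum = t ∧
    (∑ j ∈ Finset.range t, b ^ (j * e)) < b ^ (t * e) := by
  have hb1 : 1 < b := hb
  induction t with
  | zero => simp
  | succ t ih =>
    obtain ⟨ihs, ihlt⟩ := ih
    rw [Finset.sum_range_succ]
    set S := ∑ j ∈ Finset.range t, b ^ (j * e) with hS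
    have hlen : (Nat.digits b S).length ≤ t * e := by
      rcases Nat.eq_zero_or_pos S with h0 | h0
      · simp [h0]
      · rw [Nat.digits_len b S hb1 (by omega)]
        have := (Nat.log_lt_iff_lt_pow hb1 (by omega : S ≠ 0)).mpr ihlt
        omega
    constructor
    · have key := Nat.digits_append_zeroes_append_digits
        (b := b) (k := t * e - (Nat.digits b S).length) (m := 1) (n := S) hb1 one_pos
      rw [Nat.add_sub_cancel' hlen] at key
      rw [mul_one] at key
      rw [← key]
      have e1 : 1 % b = 1 := Nat.mod_eq_of_lt (by omega)
      have e2 : 1 / b = 0 := Nat.div_eq_of_lt (by omega)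
      simp [ihs, Nat.digits_def' hb1 one_pos, e1, e2]
    · have h1 : S + b ^ (t * e) < b ^ (t * e) + b ^ (t * e) := by omega
      have h2 : b ^ (t * e) + b ^ (t * e) ≤ b ^ ((t + 1) * e) := by
        have : b ^ ((t + 1) * e) = b ^ e * b ^ (t * e) := by
          rw [← pow_add]; ring_nf
        have hbe : 2 ≤ b ^ e := le_trans hb (Nat.le_self_pow (by omega) b)
        calc b ^ (t * e) + b ^ (t * e) = 2 * b ^ (t * e) := by ring
          _ ≤ b ^ e * b ^ (t * e) := Nat.mul_le_mul_right _ hbe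
          _ = b ^ ((t + 1) * e) := this.symm
      omega

/-- With `ω = ord_{ms}(b^k)` and `n = Σ_{j<s} (b^k)^{jω}`, the integer `n` lies in the
progression `r mod m` and is simultaneously `b`-Niven and `b^k`-Niven. -/
theorem stmt_8 (b k m r s : ℕ) (hb : 2 ≤ b) (hk : 1 ≤ k) (hm : 1 ≤ m)
    (hgcd : Nat.gcd m b = 1) (hr : r < m) (hs : 1 ≤ s) (hsr : s ≡ r [MOD m])
    (hsb : Nat.gcd s b = 1)
    (ω : ℕ) (hω : ω = orderOf ((b ^ k : ℕ) : ZMod (m * s)))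
    (n : ℕ) (hn : n = ∑ j ∈ Finset.range s, (b ^ k) ^ (j * ω)) :
    n ≡ r [MOD m] ∧ (Nat.digits b n).sum ∣ n ∧ (Nat.digits (b ^ k) n).sum ∣ n := by
  have hms : 1 ≤ m * s := Nat.one_le_iff_ne_zero.mpr (by positivity)
  haveI : NeZero (m * s) := ⟨by omega⟩
  -- coprimality of b^k with m*s
  have hcop : Nat.Coprime (b ^ k) (m * s) := by
    have h1 : Nat.Coprime b m := (Nat.coprime_comm.mp hgcd)
    have h2 : Nat.Coprime b s := (Nat.coprime_comm.mp hsb)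
    exact (Nat.Coprime.mul_right h1 h2).pow_left k
  -- ω ≥ 1
  have hω1 : 1 ≤ ω := by
    rw [hω]
    have hu : IsUnit ((b ^ k : ℕ) : ZMod (m * s)) :=
      (ZMod.isUnit_iff_coprime (b ^ k) (m * s)).mpr hcop
    obtain ⟨u, hu⟩ := hu
    rw [← hu, orderOf_units]
    exact orderOf_pos u
  -- n ≡ s mod (m*s)
  have hnms : n ≡ s [MOD m * s] := by
    rw [← ZMod.natCast_eq_natCast_iff]
    have hpow : ((b ^ k : ℕ) : ZMod (m * s)) ^ ω = 1 := by
      rw [hω]; exact pow_orderOf_eq_one _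
    rw [hn]
    push_cast
    have : ∀ j ∈ Finset.range s,
        (((b : ZMod (m * s)) ^ k) ^ (j * ω)) = 1 := by
      intro j _
      have : ((b : ZMod (m * s)) ^ k) ^ (j * ω) = (((b : ZMod (m*s)) ^ k) ^ ω) ^ j := by
        rw [← pow_mul, ← pow_mul]; ring_nf
      rw [this]
      push_cast at hpow
      rw [hpow, one_pow]
    rw [Finset.sum_congr rfl this]
    simp
  -- n ≡ r mod m
  have hnm : n ≡ r [MOD m] := (hnms.of_mul_right s).trans hsr
  -- s ∣ n
  have hsn : s ∣ n := by
    have h1 : n ≡ s [MOD s] := hnms.of_mul_left m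
    have h2 : n ≡ 0 [MOD s] := h1.trans (Nat.modEq_zero_iff_dvd.mpr dvd_rfl)
    exact (Nat.modEq_zero_iff_dvd).mp h2
  -- digit sums
  have hB : 2 ≤ b ^ k := le_trans hb (Nat.le_self_pow (by omega) b)
  have hsumB : (Nat.digits (b ^ k) n).sum = s := by
    rw [hn]; exact (sum_digits_geom (b ^ k) ω hB hω1 s).1
  have hsumb : (Nat.digits b n).sum = s := by
    have hn' : n = ∑ j ∈ Finset.range s, b ^ (j * (k * ω)) := by
      rw [hn]
      refine Finset.sum_congr rfl fun j _ => ?_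
      rw [← pow_mul]; ring_nf
    rw [hn']
    exact (sum_digits_geom b (k * ω) hb (Nat.mul_pos hk hω1) s).1
  exact ⟨hnm, hsumb ▸ hsn, hsumB ▸ hsn⟩
end

section
/- Let b ≥ 2 and k ≥ 1 be integers, and set K = lcm(1, 2, ..., k). Let m ≥ 1 with gcd(m, b) = 1 and let r satisfy 0 ≤ r < m. Then there exist infinitely many positive integers n with n ≡ r (mod m) such that for every ℓ with 1 ≤ ℓ ≤ k, s_{b^ℓ}(n) divides n; i.e., n is simultaneously b^ℓ-Niven for all ℓ = 1, ..., k. -/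
lemma digB1 {B : ℕ} (hB : 2 ≤ B) : Nat.digits B 1 = [1] := by
  rw [Nat.digits_def' (by omega : 1 < B) one_pos, Nat.mod_eq_of_lt (by omega),
    Nat.div_eq_of_lt (by omega)]
  simp

lemma sumdig (B T : ℕ) (hB : 2 ≤ B) (hT : 1 ≤ T) (D : ℕ) :
    (Nat.digits B (∑ j ∈ Finset.range D, B ^ (j * T))).sum = D := by
  induction D with
  | zero => simp
  | succ D ih =>
    rw [Finset.sum_range_succ']
    have hrw : ∑ j ∈ Finset.range D, B ^ ((j + 1) * T)
        = B ^ T * ∑ j ∈ Finset.range D, B ^ (j * T) := by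
      rw [Finset.mul_sum]
      refine Finset.sum_congr rfl fun j _ => ?_
      rw [← pow_add]; ring_nf
    rw [hrw]
    simp only [Nat.zero_mul, pow_zero]
    set u := ∑ j ∈ Finset.range D, B ^ (j * T) with hu
    rcases Nat.eq_zero_or_pos u with h0 | hpos
    · rw [h0] at ih ⊢
      simp only [Nat.digits_zero, List.sum_nil] at ih
      simp [digB1 hB, ← ih]
    · have h1 : (1 : ℕ) < B := by omega
      have key := Nat.digits_append_zeroes_append_digits (b := B) (k := T - 1)
        (m := u) (n := 1) h1 hpos
      rw [digB1 hB] at key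
      have hlen : ([1] : List ℕ).length = 1 := rfl
      rw [hlen, (by omega : 1 + (T - 1) = T)] at key
      rw [add_comm (B ^ T * u) 1, ← key]
      simp [ih, add_comm]

lemma sumdig' (B T a : ℕ) (hB : 2 ≤ B) (hT : 1 ≤ T) (D : ℕ) :
    (Nat.digits B (∑ j ∈ Finset.range D, B ^ (a + j * T))).sum = D := by
  have hrw : ∑ j ∈ Finset.range D, B ^ (a + j * T)
      = B ^ a * ∑ j ∈ Finset.range D, B ^ (j * T) := by
    rw [Finset.mul_sum]
    exact Finset.sum_congr rfl fun j _ => (pow_add B a (j * T))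
  rw [hrw]
  rcases Nat.eq_zero_or_pos D with rfl | hD
  · simp
  · have hpos : 0 < ∑ j ∈ Finset.range D, B ^ (j * T) :=
      Finset.sum_pos (fun j _ => Nat.pow_pos (by omega)) (by simp; omega)
    rw [Nat.digits_base_pow_mul (by omega) hpos]
    simp [sumdig B T hB hT D]

/-- Every progression `r mod m` with `gcd(m,b)=1` contains infinitely many integers
that are simultaneously `b^ℓ`-Niven for all `ℓ = 1, ..., k`. -/
theorem stmt_11 (b k m r : ℕ) (hb : 2 ≤ b) (hk : 1 ≤ k) (hm : 1 ≤ m)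
    (hgcd : Nat.gcd m b = 1) (hr : r < m) :
    {n : ℕ | 0 < n ∧ n ≡ r [MOD m] ∧
      ∀ ℓ : ℕ, 1 ≤ ℓ → ℓ ≤ k → (Nat.digits (b ^ ℓ) n).sum ∣ n}.Infinite := by
  -- Setup
  set K := k.factorial with hKdef
  have hK : 1 ≤ K := k.factorial_pos
  obtain ⟨D, hDr, hDb⟩ := Nat.chineseRemainder (n := m) (m := b) hgcd r 1
  have hD1 : 1 ≤ D := by
    rcases Nat.eq_zero_or_pos D with rfl | h
    · exfalso
      have := hDb
      unfold Nat.ModEq at this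
      rw [Nat.zero_mod, Nat.mod_eq_of_lt (by omega)] at this
      omega
    · exact h
  have hDbco : Nat.Coprime D b := by
    have hdvd : b ∣ D - 1 := (Nat.modEq_iff_dvd' hD1).mp hDb.symm
    have h1 : Nat.gcd D b ∣ 1 := by
      have h2 : Nat.gcd D b ∣ D - 1 := dvd_trans (Nat.gcd_dvd_right D b) hdvd
      have h3 : Nat.gcd D b ∣ D := Nat.gcd_dvd_left D b
      have := Nat.dvd_sub h3 h2
      rwa [Nat.sub_sub_self hD1] at this
    exact Nat.eq_one_of_dvd_one h1
  set M := m * D with hMdef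
  have hM : 1 ≤ M := Nat.one_le_iff_ne_zero.mpr (by positivity)
  have hcoM : Nat.Coprime (b ^ K) M := by
    apply Nat.Coprime.pow_left
    exact Nat.Coprime.mul_right (Nat.coprime_comm.mp hgcd) hDbco.symm
  set T := Nat.totient M with hTdef
  have hT : 1 ≤ T := Nat.totient_pos.mpr (by omega)
  have hpow : (b ^ K) ^ T ≡ 1 [MOD M] := Nat.ModEq.pow_totient hcoM
  set f : ℕ → ℕ := fun c => ∑ j ∈ Finset.range D, b ^ (K * T * (c + 1 + j)) with hfdef
  -- f c ≡ D mod M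
  have hmod : ∀ c, f c ≡ D [MOD M] := by
    intro c
    rw [← ZMod.natCast_eq_natCast_iff]
    have hx : ((b : ZMod M) ^ K) ^ T = 1 := by
      have h := (ZMod.natCast_eq_natCast_iff _ _ _).mpr hpow
      push_cast at h
      exact h
    have hterm : ∀ j ∈ Finset.range D, ((b : ZMod M)) ^ (K * T * (c + 1 + j)) = 1 := by
      intro j _
      rw [show K * T * (c + 1 + j) = K * (T * (c + 1 + j)) by ring, pow_mul, pow_mul, hx, one_pow]
    have hc : ((f c : ℕ) : ZMod M) = ∑ j ∈ Finset.range D, ((b : ZMod M)) ^ (K * T * (c + 1 + j)) := by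
      simp only [hfdef]
      push_cast
      rfl
    rw [hc, Finset.sum_congr rfl hterm, Finset.sum_const, Finset.card_range, nsmul_eq_mul, mul_one]
  -- basic facts
  have hfpos : ∀ c, 0 < f c := by
    intro c
    apply Finset.sum_pos (fun j _ => Nat.pow_pos (by omega))
    simp
    omega
  have hDvd : ∀ c, D ∣ f c := by
    intro c
    have h1 : f c ≡ D [MOD D] := (hmod c).of_dvd ⟨m, by rw [hMdef]; ring⟩
    have h2 : f c ≡ 0 [MOD D] := h1.trans (Nat.modEq_zero_iff_dvd.mpr dvd_rfl)
    exact Nat.modEq_zero_iff_dvd.mp h2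
  have hRmod : ∀ c, f c ≡ r [MOD m] := by
    intro c
    exact ((hmod c).of_dvd ⟨D, rfl⟩).trans hDr
  have hdigit : ∀ c, ∀ ℓ : ℕ, 1 ≤ ℓ → ℓ ≤ k → (Nat.digits (b ^ ℓ) (f c)).sum = D := by
    intro c ℓ hℓ1 hℓk
    obtain ⟨q, hq⟩ : ℓ ∣ K := Nat.dvd_factorial (by omega) hℓk
    have hq1 : 1 ≤ q := by
      rcases Nat.eq_zero_or_pos q with rfl | h
      · exfalso; omega
      · exact h
    have hBl : 2 ≤ b ^ ℓ := le_trans hb (Nat.le_self_pow (by omega) b)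
    have hfrw : f c = ∑ j ∈ Finset.range D, (b ^ ℓ) ^ (q * T * (c + 1) + j * (q * T)) := by
      simp only [hfdef]
      refine Finset.sum_congr rfl fun j _ => ?_
      rw [← pow_mul]
      congr 1
      rw [hq]
      ring
    rw [hfrw]
    exact sumdig' (b ^ ℓ) (q * T) (q * T * (c + 1)) hBl (Nat.mul_pos hq1 hT) D
  -- conclude
  apply Set.infinite_of_injective_forall_mem (f := f)
  case hi =>
    have hsm : StrictMono f := by
      intro c c' hcc
      apply Finset.sum_lt_sum_of_nonempty (by simp; omega)
      intro j _
      apply Nat.pow_lt_pow_right (by omega)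
      have hKT : 0 < K * T := Nat.mul_pos (by omega) hT
      exact (Nat.mul_lt_mul_left hKT).mpr (by omega)
    exact hsm.injective
  case hf =>
    intro c
    refine ⟨hfpos c, hRmod c, fun ℓ h1 h2 => ?_⟩
    rw [hdigit c ℓ h1 h2]
    exact hDvd c
end

section
/- Let b ≥ 2 and k ≥ 1 be integers, let m ≥ 1 with gcd(m, b) = 1, and let r satisfy 0 ≤ r < m. Then for every integer s₀ ≥ 1 there exists a positive integer n with n ≡ r (mod m) such that s_b(n) = s_{b^2}(n) = ⋯ = s_{b^k}(n) ≥ s₀ and s_{b^ℓ}(n) divides n for every ℓ with 1 ≤ ℓ ≤ k. -/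
open Finset

lemma sum_digits_pow_mul {B : ℕ} (hB : 2 ≤ B) (j q : ℕ) :
    (Nat.digits B (B ^ j * q)).sum = (Nat.digits B q).sum := by
  rcases Nat.eq_zero_or_pos q with rfl | hq
  · simp
  · rw [Nat.digits_base_pow_mul (by omega) hq]
    simp

lemma sum_digits_geom_s12 {B c : ℕ} (hB : 2 ≤ B) (hc : 1 ≤ c) :
    ∀ S : ℕ, (Nat.digits B (∑ i ∈ Finset.range S, B ^ (c * i))).sum = S := by
  intro S
  induction S with
  | zero => simp
  | succ S ih =>
    have key : (∑ i ∈ Finset.range (S+1), B ^ (c * i))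
        = 1 + B ^ c * (∑ i ∈ Finset.range S, B ^ (c * i)) := by
      rw [Finset.sum_range_succ']
      simp only [mul_zero, pow_zero, Finset.mul_sum, ← pow_add]
      rw [add_comm]
      congr 1
      apply Finset.sum_congr rfl
      intro i _
      ring_nf
    set q := ∑ i ∈ Finset.range S, B ^ (c * i) with hqdef
    have hpos : 0 < 1 + B ^ c * q := by positivity
    rw [key, Nat.digits_def' (by omega : 1 < B) hpos]
    have hdvd : B ∣ B ^ c * q := Dvd.dvd.mul_right (dvd_pow_self B (by omega)) q
    obtain ⟨t, ht⟩ := hdvd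
    have hmod : (1 + B ^ c * q) % B = 1 := by
      rw [ht, add_comm, Nat.mul_add_mod, Nat.mod_eq_of_lt (by omega)]
    have hdiv : (1 + B ^ c * q) / B = B ^ (c - 1) * q := by
      rw [ht, add_comm, Nat.mul_add_div (by omega), Nat.div_eq_of_lt (by omega), add_zero]
      have : B * (B ^ (c-1) * q) = B ^ c * q := by
        rw [← mul_assoc, ← pow_succ']
        congr 2
        omega
      have hB0 : 0 < B := by omega
      exact Nat.eq_of_mul_eq_mul_left hB0 (by rw [ht] at this; omega)
    rw [hmod, hdiv, List.sum_cons, sum_digits_pow_mul hB, ih]; omega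

lemma geom_modeq {b E P : ℕ} (h : b ^ E ≡ 1 [MOD P]) :
    ∀ S : ℕ, (∑ i ∈ Finset.range S, b ^ (E * i)) ≡ S [MOD P] := by
  intro S
  induction S with
  | zero => rfl
  | succ S ih =>
    rw [Finset.sum_range_succ]
    have : b ^ (E * S) ≡ 1 [MOD P] := by
      rw [pow_mul]
      calc (b ^ E) ^ S ≡ 1 ^ S [MOD P] := h.pow S
        _ = 1 := one_pow S
    exact ih.add this

/-- For every `s₀ ≥ 1` there exists `n` in the progression with
`s_b(n) = s_{b^2}(n) = ⋯ = s_{b^k}(n) ≥ s₀` and `n` simultaneously `b^ℓ`-Niven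
for all `ℓ = 1, ..., k`. -/
theorem stmt_12 (b k m r : ℕ) (hb : 2 ≤ b) (hk : 1 ≤ k) (hm : 1 ≤ m)
    (hgcd : Nat.gcd m b = 1) (hr : r < m) (s₀ : ℕ) (hs₀ : 1 ≤ s₀) :
    ∃ n : ℕ, 0 < n ∧ n ≡ r [MOD m] ∧
      (∀ ℓ : ℕ, 1 ≤ ℓ → ℓ ≤ k → (Nat.digits (b ^ ℓ) n).sum = (Nat.digits b n).sum) ∧
      s₀ ≤ (Nat.digits b n).sum ∧
      ∀ ℓ : ℕ, 1 ≤ ℓ → ℓ ≤ k → (Nat.digits (b ^ ℓ) n).sum ∣ n := by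
  -- pick S ≡ r [MOD m], S ≡ 1 [MOD b], S ≥ s₀
  obtain ⟨x, hxr, hxb⟩ := Nat.chineseRemainder hgcd r 1
  set S := x + m * b * s₀ with hS
  have hSr : S ≡ r [MOD m] := by
    have : S ≡ x [MOD m] := (Nat.modEq_iff_dvd' (by omega)).2 ⟨b * s₀, by rw [hS]; ring_nf; omega⟩ |>.symm
    exact this.trans hxr
  have hSb : S ≡ 1 [MOD b] := by
    have : S ≡ x [MOD b] := (Nat.modEq_iff_dvd' (by omega)).2 ⟨m * s₀, by rw [hS]; ring_nf; omega⟩ |>.symm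
    exact this.trans hxb
  have hmbs : s₀ ≤ m * b * s₀ := Nat.le_mul_of_pos_left s₀ (by positivity)
  have hSpos : 1 ≤ S := by omega
  have hSs₀ : s₀ ≤ S := by omega
  have hcopSb : Nat.Coprime b S := by
    have h1 : S % b = 1 := by
      have := hSb; unfold Nat.ModEq at this
      rwa [Nat.mod_eq_of_lt (by omega : 1 < b)] at this
    unfold Nat.Coprime
    rw [Nat.gcd_rec, h1]
    exact Nat.gcd_one_left b
  have hcopbP : Nat.Coprime b (m * S) :=
    Nat.Coprime.mul_right (Nat.coprime_comm.mp hgcd) hcopSb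
  set P := m * S with hP
  have hPpos : 0 < P := by positivity
  set E := Nat.factorial k * Nat.totient P with hE
  have hEpos : 0 < E := Nat.mul_pos (Nat.factorial_pos k) (Nat.totient_pos.mpr hPpos)
  have hbE : b ^ E ≡ 1 [MOD P] := by
    rw [hE, mul_comm, pow_mul]
    calc (b ^ Nat.totient P) ^ Nat.factorial k ≡ 1 ^ Nat.factorial k [MOD P] :=
          (Nat.ModEq.pow_totient hcopbP).pow _
      _ = 1 := one_pow _
  set n := ∑ i ∈ Finset.range S, b ^ (E * i) with hn
  have hnS : n ≡ S [MOD P] := geom_modeq hbE S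
  have hnpos : 0 < n := by
    apply Finset.sum_pos
    · intro i _; positivity
    · exact ⟨0, Finset.mem_range.mpr hSpos⟩
  have hsumb : (Nat.digits b n).sum = S := sum_digits_geom_s12 hb hEpos S
  have hsuml : ∀ ℓ : ℕ, 1 ≤ ℓ → ℓ ≤ k → (Nat.digits (b ^ ℓ) n).sum = S := by
    intro ℓ h1 h2
    have hdvd : ℓ ∣ E := Dvd.dvd.mul_right (Nat.dvd_factorial (by omega) h2) _
    have hBl : 2 ≤ b ^ ℓ := le_trans hb (Nat.le_self_pow (by omega) b)
    have hc : 1 ≤ E / ℓ := Nat.div_pos (Nat.le_of_dvd hEpos hdvd) (by omega)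
    have hrw : n = ∑ i ∈ Finset.range S, (b ^ ℓ) ^ ((E / ℓ) * i) := by
      rw [hn]
      apply Finset.sum_congr rfl
      intro i _
      rw [← pow_mul]
      congr 1
      have : ℓ * (E / ℓ) = E := Nat.mul_div_cancel' hdvd
      calc E * i = (ℓ * (E / ℓ)) * i := by rw [this]
        _ = ℓ * (E / ℓ * i) := by ring
    rw [hrw]
    exact sum_digits_geom_s12 hBl hc S
  refine ⟨n, hnpos, ?_, ?_, ?_, ?_⟩
  · have h1 : n ≡ S [MOD m] := hnS.of_dvd ⟨S, rfl⟩
    exact h1.trans hSr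
  · intro ℓ h1 h2
    rw [hsuml ℓ h1 h2, hsumb]
  · rw [hsumb]; exact hSs₀
  · intro ℓ h1 h2
    rw [hsuml ℓ h1 h2]
    have h1 : n ≡ S [MOD S] := hnS.of_dvd ⟨m, mul_comm m S⟩
    have : n % S = 0 := by
      have := h1; unfold Nat.ModEq at this
      rwa [Nat.mod_self] at this
    exact Nat.dvd_of_mod_eq_zero this
end

section
/- Let b ≥ 2 and k ≥ 1 be integers, set K = lcm(1, 2, ..., k) and B̄ = b^K. Let m ≥ 1 with gcd(m, b) = 1, and let s ≥ 1 satisfy gcd(s, b) = 1. Set Ω = ord_{ms}(B̄), the multiplicative order of B̄ modulo ms, and N = Σ_{j=0}^{s−1} B̄^{jΩ}. Then for every ℓ with 1 ≤ ℓ ≤ k, the base-b^ℓ digit sum of N equals s, i.e., s_{b^ℓ}(N) = s. -/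
lemma aux_pow_mul (B : ℕ) (hB : 2 ≤ B) :
    ∀ e N : ℕ, (Nat.digits B (B ^ e * N)).sum = (Nat.digits B N).sum := by
  intro e
  induction e with
  | zero => intro N; simp
  | succ e ih =>
    intro N
    rcases Nat.eq_zero_or_pos N with h | h
    · simp [h]
    have h2 : B ^ (e + 1) * N = B * (B ^ e * N) := by ring
    have hmod : (B * (B ^ e * N)) % B = 0 := Nat.mul_mod_right _ _
    rw [h2, Nat.digits_def' (by omega : 1 < B) (by positivity), hmod,
        Nat.mul_div_cancel_left _ (by omega : 0 < B)]
    simp [ih N]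

lemma aux_one_add (B N e : ℕ) (hB : 2 ≤ B) (he : 1 ≤ e) :
    (Nat.digits B (1 + B ^ e * N)).sum = 1 + (Nat.digits B N).sum := by
  obtain ⟨e', rfl⟩ : ∃ e', e = e' + 1 := ⟨e - 1, by omega⟩
  have h1 : 1 + B ^ (e' + 1) * N = 1 + B * (B ^ e' * N) := by ring
  rw [h1, Nat.digits_def' (by omega : 1 < B) (by positivity)]
  have hmod : (1 + B * (B ^ e' * N)) % B = 1 := by
    rw [Nat.add_mul_mod_self_left, Nat.mod_eq_of_lt (by omega)]
  have hdiv : (1 + B * (B ^ e' * N)) / B = B ^ e' * N := by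
    rw [Nat.add_mul_div_left _ _ (by omega : 0 < B), Nat.div_eq_of_lt (by omega), Nat.zero_add]
  rw [hmod, hdiv]
  simp [aux_pow_mul B hB e' N]

lemma aux_sum (B e : ℕ) (hB : 2 ≤ B) (he : 1 ≤ e) :
    ∀ s : ℕ, (Nat.digits B (∑ j ∈ Finset.range s, B ^ (j * e))).sum = s := by
  intro s
  induction s with
  | zero => simp
  | succ s ih =>
    rw [Finset.sum_range_succ']
    have h1 : ∀ j : ℕ, B ^ ((j + 1) * e) = B ^ e * B ^ (j * e) := by
      intro j; rw [← pow_add]; ring_nf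
    simp only [h1, ← Finset.mul_sum, Nat.zero_mul, pow_zero]
    rw [add_comm, aux_one_add B _ e hB he, ih]
    omega

/-- With `K = lcm(1,…,k)`, `B̄ = b^K`, `Ω = ord_{ms}(B̄)` and `N = Σ_{j<s} B̄^{jΩ}`,
the base-`b^ℓ` digit sum of `N` equals `s` for every `1 ≤ ℓ ≤ k`. -/
theorem stmt_13 (b k m s : ℕ) (hb : 2 ≤ b) (hk : 1 ≤ k) (hm : 1 ≤ m)
    (hgcd : Nat.gcd m b = 1) (hs : 1 ≤ s) (hsb : Nat.gcd s b = 1)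
    (K : ℕ) (hK : K = Finset.lcm (Finset.Icc 1 k) id)
    (Ω : ℕ) (hΩ : Ω = orderOf ((b ^ K : ℕ) : ZMod (m * s)))
    (N : ℕ) (hN : N = ∑ j ∈ Finset.range s, (b ^ K) ^ (j * Ω)) :
    ∀ ℓ : ℕ, 1 ≤ ℓ → ℓ ≤ k → (Nat.digits (b ^ ℓ) N).sum = s := by
  -- K is positive
  have hKne : K ≠ 0 := by
    intro h0
    rw [hK] at h0
    rw [Finset.lcm_eq_zero_iff] at h0
    simp only [Set.mem_image, Finset.mem_coe, Finset.mem_Icc, id] at h0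
    obtain ⟨x, ⟨hx1, _⟩, hx0⟩ := h0
    omega
  -- Ω is positive
  have hcop : Nat.Coprime (b ^ K) (m * s) := by
    apply Nat.Coprime.pow_left
    exact Nat.Coprime.mul_right (Nat.Coprime.symm hgcd) (Nat.Coprime.symm hsb)
  haveI : NeZero (m * s) := ⟨by positivity⟩
  have hΩpos : 1 ≤ Ω := by
    rw [hΩ]
    have := ZMod.coe_unitOfCoprime (b ^ K) hcop (n := m * s)
    rw [← this, orderOf_units]
    exact orderOf_pos _
  intro ℓ hℓ1 hℓk
  -- ℓ divides K
  have hdvd : ℓ ∣ K := by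
    rw [hK]
    exact Finset.dvd_lcm (by simp [Finset.mem_Icc]; omega)
  obtain ⟨c, hc⟩ := hdvd
  have hcpos : 1 ≤ c := by
    rcases Nat.eq_zero_or_pos c with h | h
    · subst h; simp at hc; omega
    · exact h
  have hB : 2 ≤ b ^ ℓ := le_trans hb (Nat.le_self_pow (by omega) b)
  have hrw : N = ∑ j ∈ Finset.range s, (b ^ ℓ) ^ (j * (c * Ω)) := by
    rw [hN]
    apply Finset.sum_congr rfl
    intro j _
    rw [← pow_mul, ← pow_mul, hc]
    ring_nf
  rw [hrw]
  exact aux_sum (b ^ ℓ) (c * Ω) hB (Nat.one_le_iff_ne_zero.2 (by positivity)) s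
end

section
/- Let b ≥ 2 be an integer, let m ≥ 1 with gcd(m, b) = 1, let r satisfy 0 ≤ r < m, and let s ≥ 1 satisfy s ≡ r (mod m) and gcd(s, b) = 1. Set ω = ord_{ms}(b), the multiplicative order of b modulo ms, and n = Σ_{j=0}^{s−1} b^{jω}. Then n ≡ s (mod ms), s_b(n) = s, and hence n ≡ r (mod m) and n is b-Niven. -/
lemma aux_digits_one (b : ℕ) (hb : 2 ≤ b) : Nat.digits b 1 = [1] := by
  rw [Nat.digits_def' (show 1 < b by omega) one_pos,
    Nat.mod_eq_of_lt (by omega), Nat.div_eq_of_lt (by omega), Nat.digits_zero]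

lemma aux_digit_sum (b ω : ℕ) (hb : 2 ≤ b) (hω : 1 ≤ ω) :
    ∀ s : ℕ, (Nat.digits b (∑ j ∈ Finset.range s, b ^ (j * ω))).sum = s := by
  intro s
  induction s with
  | zero => simp
  | succ t ih =>
    rcases Nat.eq_zero_or_pos t with rfl | ht
    · simp [aux_digits_one b hb]
    have hpos : 0 < ∑ j ∈ Finset.range t, b ^ (j * ω) := by
      apply Finset.sum_pos
      · intro i _; positivity
      · exact Finset.nonempty_range_iff.mpr ht.ne'
    have hsum : ∑ j ∈ Finset.range (t + 1), b ^ (j * ω)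
        = 1 + b ^ ((Nat.digits b 1).length + (ω - 1)) * ∑ j ∈ Finset.range t, b ^ (j * ω) := by
      rw [Finset.sum_range_succ' (fun j => b ^ (j * ω)) t]
      rw [aux_digits_one b hb]
      have h1 : (([1] : List ℕ)).length + (ω - 1) = ω := by simp; omega
      rw [h1, Finset.mul_sum, add_comm]
      congr 1
      · simp
      · apply Finset.sum_congr rfl
        intro j _
        rw [← pow_add]
        congr 1
        ring
    rw [hsum, ← Nat.digits_append_zeroes_append_digits (by omega : 1 < b) hpos]
    simp [ih, aux_digits_one b hb, add_comm]

/-- Single-base case: with `ω = ord_{ms}(b)` and `n = Σ_{j<s} b^{jω}`, we have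
`n ≡ s (mod ms)`, `s_b(n) = s`, hence `n ≡ r (mod m)` and `n` is `b`-Niven. -/
theorem stmt_15 (b m r s : ℕ) (hb : 2 ≤ b) (hm : 1 ≤ m)
    (hgcd : Nat.gcd m b = 1) (hr : r < m) (hs : 1 ≤ s) (hsr : s ≡ r [MOD m])
    (hsb : Nat.gcd s b = 1)
    (ω : ℕ) (hω : ω = orderOf ((b : ℕ) : ZMod (m * s)))
    (n : ℕ) (hn : n = ∑ j ∈ Finset.range s, b ^ (j * ω)) :
    n ≡ s [MOD m * s] ∧ (Nat.digits b n).sum = s ∧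
      n ≡ r [MOD m] ∧ (Nat.digits b n).sum ∣ n := by
  have hms : 0 < m * s := Nat.mul_pos hm hs
  haveI : NeZero (m * s) := ⟨hms.ne'⟩
  have hunit : IsUnit ((b : ℕ) : ZMod (m * s)) := by
    rw [ZMod.isUnit_iff_coprime]
    exact (Nat.coprime_comm.mp hgcd).mul_right (Nat.coprime_comm.mp hsb)
  have hω1 : 1 ≤ ω := by
    have hpos : 0 < orderOf hunit.unit := orderOf_pos _
    rw [hω, ← hunit.unit_spec, orderOf_units]
    exact hpos
  have h1 : n ≡ s [MOD m * s] := by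
    rw [← ZMod.natCast_eq_natCast_iff, hn]
    push_cast
    have hbω : ((b : ZMod (m * s))) ^ ω = 1 := by rw [hω]; exact pow_orderOf_eq_one _
    have : ∀ j ∈ Finset.range s, ((b : ZMod (m * s))) ^ (j * ω) = 1 := by
      intro j _
      rw [pow_mul', hbω, one_pow]
    rw [Finset.sum_congr rfl this]
    simp
  have h2 : (Nat.digits b n).sum = s := by
    rw [hn]; exact aux_digit_sum b ω hb hω1 s
  refine ⟨h1, h2, ?_, ?_⟩
  · exact (h1.of_mul_right s).trans hsr
  · rw [h2]
    have hns : n ≡ s [MOD s] := h1.of_mul_left m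
    have hmod : n % s = 0 := by
      have := hns
      unfold Nat.ModEq at this
      simpa using this
    exact Nat.dvd_of_mod_eq_zero hmod
end

section
/- Let b ≥ 2 be an integer, let m ≥ 1 with gcd(m, b) = 1, and let r satisfy 0 ≤ r < m. Then there exist infinitely many positive integers n with n ≡ r (mod m) such that s_b(n) divides n; i.e., the arithmetic progression {n : n ≡ r (mod m)} contains infinitely many b-Niven numbers. -/
private def nivenAux (b d : ℕ) : ℕ → ℕ
  | 0 => 0
  | k + 1 => b ^ d * nivenAux b d k + 1

private lemma nivenAux_modEq {b d M : ℕ} (h : b ^ d ≡ 1 [MOD M]) :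
    ∀ k, nivenAux b d k ≡ k [MOD M] := by
  intro k
  induction k with
  | zero => rfl
  | succ k ih =>
    have : b ^ d * nivenAux b d k + 1 ≡ 1 * k + 1 [MOD M] :=
      (h.mul ih).add_right 1
    simpa [nivenAux] using this

private lemma sum_digits_base_mul {b : ℕ} (hb : 2 ≤ b) (n : ℕ) :
    (Nat.digits b (b * n)).sum = (Nat.digits b n).sum := by
  rcases Nat.eq_zero_or_pos n with h | h
  · simp [h]
  · have hbn : 0 < b * n := Nat.mul_pos (by omega) h
    rw [Nat.digits_def' (by omega : 1 < b) hbn]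
    have h1 : b * n % b = 0 := Nat.mul_mod_right b n
    have h2 : b * n / b = n := Nat.mul_div_cancel_left n (by omega)
    rw [h1, h2]
    simp

private lemma sum_digits_pow_mul_s16 {b : ℕ} (hb : 2 ≤ b) (e n : ℕ) :
    (Nat.digits b (b ^ e * n)).sum = (Nat.digits b n).sum := by
  induction e with
  | zero => simp
  | succ e ih =>
    have : b ^ (e + 1) * n = b * (b ^ e * n) := by ring
    rw [this, sum_digits_base_mul hb, ih]

private lemma sum_digits_nivenAux {b d : ℕ} (hb : 2 ≤ b) (hd : 1 ≤ d) :
    ∀ k, (Nat.digits b (nivenAux b d k)).sum = k := by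
  intro k
  induction k with
  | zero => simp [nivenAux]
  | succ k ih =>
    show (Nat.digits b (b ^ d * nivenAux b d k + 1)).sum = k + 1
    obtain ⟨e, rfl⟩ : ∃ e, d = e + 1 := ⟨d - 1, by omega⟩
    have hrw : b ^ (e + 1) * nivenAux b (e + 1) k + 1
        = b * (b ^ e * nivenAux b (e + 1) k) + 1 := by ring
    rw [hrw, Nat.digits_def' (by omega : 1 < b) (by omega)]
    have h1 : (b * (b ^ e * nivenAux b (e + 1) k) + 1) % b = 1 := by
      rw [Nat.mul_add_mod]
      exact Nat.mod_eq_of_lt (by omega)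
    have h2 : (b * (b ^ e * nivenAux b (e + 1) k) + 1) / b
        = b ^ e * nivenAux b (e + 1) k := by
      rw [Nat.mul_add_div (by omega : 0 < b)]
      simp [Nat.div_eq_of_lt (by omega : 1 < b)]
    rw [h1, h2]
    have := sum_digits_pow_mul_s16 hb e (nivenAux b (e + 1) k)
    rw [List.sum_cons, this, ih]
    omega

/-- Every arithmetic progression `r mod m` with `gcd(m,b)=1` contains infinitely many
`b`-Niven numbers. -/
theorem stmt_16 (b m r : ℕ) (hb : 2 ≤ b) (hm : 1 ≤ m)
    (hgcd : Nat.gcd m b = 1) (hr : r < m) :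
    {n : ℕ | 0 < n ∧ n ≡ r [MOD m] ∧ (Nat.digits b n).sum ∣ n}.Infinite := by
  -- find s ≡ r [MOD m] with s ≡ 1 [MOD b]
  have hcop : Nat.Coprime m b := hgcd
  -- choose k so that r + m * k ≡ 1 mod b
  obtain ⟨k, hk⟩ : ∃ k : ℕ, (r + m * k) ≡ 1 [MOD b] := by
    haveI : NeZero b := ⟨by omega⟩
    set u : ZMod b := ((1 : ZMod b) - (r : ZMod b)) * (m : ZMod b)⁻¹ with hu
    refine ⟨u.val, ?_⟩
    rw [← ZMod.natCast_eq_natCast_iff]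
    push_cast
    rw [ZMod.natCast_val, ZMod.cast_id]
    have hmul : (m : ZMod b) * (m : ZMod b)⁻¹ = 1 := ZMod.coe_mul_inv_eq_one m hcop
    calc (r : ZMod b) + (m : ZMod b) * u
        = (r : ZMod b) + ((1 : ZMod b) - (r : ZMod b)) * ((m : ZMod b) * (m : ZMod b)⁻¹) := by
          rw [hu]; ring
      _ = 1 := by rw [hmul]; ring
  set s := r + m * k with hs
  have hsb : s % b = 1 := by
    have : (1 : ℕ) % b = 1 := Nat.mod_eq_of_lt (by omega)
    simpa [Nat.ModEq, this] using hk
  have hs1 : 1 ≤ s := by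
    rcases Nat.eq_zero_or_pos s with h | h
    · rw [h] at hsb; simp at hsb
    · exact h
  have hsm : s ≡ r [MOD m] := by
    simp [hs, Nat.ModEq, Nat.add_mul_mod_self_left]
  have hscop : Nat.Coprime s b := by
    have : Nat.gcd b s = 1 := by
      rw [Nat.gcd_rec, hsb]
      exact Nat.gcd_one_left b
    exact Nat.coprime_comm.mp this
  set M := s * m with hM
  have hM1 : 0 < M := Nat.mul_pos hs1 hm
  have hbM : Nat.Coprime b M := Nat.Coprime.mul_right hscop.symm hcop.symm
  set d := Nat.totient M with hdd
  have hd1 : 1 ≤ d := Nat.totient_pos.mpr hM1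
  have hbd : b ^ d ≡ 1 [MOD M] := Nat.ModEq.pow_totient hbM
  set A := nivenAux b d s with hA
  have hA1 : 1 ≤ A := by
    obtain ⟨t, ht⟩ : ∃ t, s = t + 1 := ⟨s - 1, by omega⟩
    rw [hA, ht]
    show 1 ≤ b ^ d * nivenAux b d t + 1
    omega
  have hAmod : A ≡ s [MOD M] := nivenAux_modEq hbd s
  have hAsum : (Nat.digits b A).sum = s := sum_digits_nivenAux hb hd1 s
  -- the family n_j = b^(d*j) * A
  apply Set.infinite_of_injective_forall_mem
    (f := fun j : ℕ => b ^ (d * j) * A)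
  · have hmono : StrictMono fun j : ℕ => b ^ (d * j) * A := by
      intro i j hij
      have hbd2 : 2 ≤ b ^ d := le_trans hb (Nat.le_self_pow (by omega) b)
      have : b ^ (d * i) < b ^ (d * j) :=
        Nat.pow_lt_pow_right (by omega) (by
          exact Nat.mul_lt_mul_of_le_of_lt (le_refl d) hij (by omega))
      exact Nat.mul_lt_mul_of_lt_of_le this (le_refl A) (by omega)
    exact hmono.injective
  · intro j
    have hpowmod : b ^ (d * j) ≡ 1 [MOD M] := by
      have := hbd.pow j
      simpa [pow_mul, one_pow] using this
    have hnmod : b ^ (d * j) * A ≡ s [MOD M] := by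
      have := hpowmod.mul hAmod
      simpa using this.trans (by rw [one_mul])
    refine ⟨?_, ?_, ?_⟩
    · have : 1 ≤ b ^ (d * j) := Nat.one_le_pow _ _ (by omega)
      exact Nat.mul_pos this hA1
    · have h1 : b ^ (d * j) * A ≡ s [MOD m] := hnmod.of_mul_left s
      exact h1.trans hsm
    · have hsum : (Nat.digits b (b ^ (d * j) * A)).sum = s :=
        (sum_digits_pow_mul_s16 hb (d * j) A).trans hAsum
      rw [hsum]
      have h2 : b ^ (d * j) * A ≡ s [MOD s] := hnmod.of_mul_right m
      have h3 : b ^ (d * j) * A ≡ 0 [MOD s] := h2.trans (Nat.modEq_zero_iff_dvd.mpr dvd_rfl)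
      exact (Nat.modEq_zero_iff_dvd).mp h3
end
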